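/- arXiv:1304.5429 — 4 statements merged into one kernel-verified Lean document; each statement's English description precedes it below -/
import Mathlib

section
/- Call a finite family a' : Fin n' → ℕ of integers, each ≥ 2, a factored subform of a finite family a : Fin n → ℕ of integers, each ≥ 2, if there exists a map φ : Fin n' → Fin n such that for every i : Fin n the product ∏_{r ∈ φ⁻¹(i)} a' r divides a i; call it a nontrivial factored subform if in addition the multiset of entries of a' is not equal to the multiset of entries of a. Then there is no infinite sequence a⁰, a¹, a², … of finite families of integers ≥ 2 such that for every k, a^{k+1} is a nontrivial factored subform of a^k. -/
/-- `a'` is a factored subform of `a`: there is a map `φ` from indices of `a'`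
to indices of `a` such that for every index `i` of `a`, the product of the
entries of `a'` mapped to `i` divides `a i`. -/
def FactoredSubform {n' n : ℕ} (a' : Fin n' → ℕ) (a : Fin n → ℕ) : Prop :=
  ∃ φ : Fin n' → Fin n,
    ∀ i : Fin n, (∏ r ∈ Finset.univ.filter (fun r => φ r = i), a' r) ∣ a i

/-- A nontrivial factored subform: additionally, the multiset of entries of `a'`
differs from the multiset of entries of `a`. -/
def NontrivialFactoredSubform {n' n : ℕ} (a' : Fin n' → ℕ) (a : Fin n → ℕ) : Prop :=
  FactoredSubform a' a ∧ (↑(List.ofFn a') : Multiset ℕ) ≠ (↑(List.ofFn a) : Multiset ℕ)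

open scoped ArithmeticFunction.Omega

open ArithmeticFunction in
lemma omega_pos_of_two_le {m : ℕ} (h : 2 ≤ m) : 1 ≤ Ω m := by
  rw [cardFactors_apply]
  rcases Nat.exists_prime_and_dvd (by omega : m ≠ 1) with ⟨p, hp, hd⟩
  have := (Nat.mem_primeFactorsList (by omega)).2 ⟨hp, hd⟩
  exact List.length_pos_iff.2 (fun h => by simp [h] at this)

open ArithmeticFunction in
lemma omega_le_of_dvd {m n : ℕ} (h : m ∣ n) (hn : n ≠ 0) : Ω m ≤ Ω n := by
  obtain ⟨c, rfl⟩ := h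
  have hm : m ≠ 0 := by rintro rfl; simp at hn
  have hc : c ≠ 0 := by rintro rfl; simp at hn
  rw [cardFactors_mul hm hc]; omega

open ArithmeticFunction in
lemma omega_lt_of_dvd {m n : ℕ} (h : m ∣ n) (hn : n ≠ 0) (hne : m ≠ n) : Ω m < Ω n := by
  obtain ⟨c, rfl⟩ := h
  have hm : m ≠ 0 := by rintro rfl; simp at hn
  have hc : c ≠ 0 := by rintro rfl; simp at hn
  have hc2 : 2 ≤ c := by
    rcases Nat.lt_or_ge c 2 with h | h
    · interval_cases c
      · omega
      · simp at hne
    · exact h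
  have := omega_pos_of_two_le hc2
  rw [cardFactors_mul hm hc]; omega

open ArithmeticFunction in
lemma card_le_omega_prod {n : ℕ} (a : Fin n → ℕ) (ha : ∀ i, 2 ≤ a i) :
    n ≤ Ω (∏ i, a i) := by
  induction n with
  | zero => simp
  | succ m ih =>
    rw [Fin.prod_univ_succ]
    have h1 : a 0 ≠ 0 := by have := ha 0; omega
    have h2 : (∏ i : Fin m, a i.succ) ≠ 0 :=
      Finset.prod_ne_zero_iff.2 (fun i _ => by have := ha i.succ; omega)
    rw [cardFactors_mul h1 h2]
    have h3 : m ≤ Ω (∏ i : Fin m, a i.succ) := ih (fun i => a i.succ) (fun i => ha i.succ)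
    have := omega_pos_of_two_le (ha 0)
    omega

lemma multiset_ofFn_eq {n : ℕ} (f : Fin n → ℕ) :
    (↑(List.ofFn f) : Multiset ℕ) = Multiset.map f Finset.univ.val := by
  simp [List.ofFn_eq_map]

lemma map_val_eq_sum_singleton {α : Type*} {n : ℕ} (s : Finset (Fin n)) (f : Fin n → α) :
    Multiset.map f s.val = ∑ x ∈ s, ({f x} : Multiset α) := by
  rw [Finset.sum, show (fun x => ({f x} : Multiset α)) = (fun y => ({y} : Multiset α)) ∘ f from rfl,
    ← Multiset.map_map, Multiset.sum_map_singleton]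

open ArithmeticFunction in
lemma descent_step {n' n : ℕ} {a' : Fin n' → ℕ} {a : Fin n → ℕ}
    (ha : ∀ i, 2 ≤ a i) (_ha' : ∀ r, 2 ≤ a' r)
    (h : NontrivialFactoredSubform a' a) :
    Ω (∏ r, a' r) < Ω (∏ i, a i) ∨
      (Ω (∏ r, a' r) = Ω (∏ i, a i) ∧ n < n') := by
  obtain ⟨⟨φ, hφ⟩, hne⟩ := h
  set d : Fin n → ℕ := fun i => ∏ r ∈ Finset.univ.filter (fun r => φ r = i), a' r with hd
  have hP' : (∏ r, a' r) = ∏ i, d i :=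
    (Finset.prod_fiberwise_of_maps_to (fun r _ => Finset.mem_univ (φ r)) a').symm
  have hdvd : (∏ i, d i) ∣ ∏ i, a i := Finset.prod_dvd_prod_of_dvd _ _ (fun i _ => hφ i)
  have haP : (∏ i, a i) ≠ 0 :=
    Finset.prod_ne_zero_iff.2 (fun i _ => by have := ha i; omega)
  by_cases hEq : (∏ i, d i) = ∏ i, a i
  · -- products equal, so each fiber product equals `a i`
    have hdle : ∀ i, d i ≤ a i := fun i => Nat.le_of_dvd (by have := ha i; omega) (hφ i)
    have hdeq : ∀ i, d i = a i := by
      by_contra hcon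
      push_neg at hcon
      obtain ⟨j, hj⟩ := hcon
      have hdpos : ∀ i ∈ Finset.univ, 0 < d i := fun i _ =>
        Nat.pos_of_dvd_of_pos (hφ i) (by have := ha i; omega)
      have := Finset.prod_lt_prod hdpos (fun i _ => hdle i)
        ⟨j, Finset.mem_univ j, lt_of_le_of_ne (hdle j) hj⟩
      omega
    -- fibers are nonempty
    have hfib : ∀ i : Fin n, (Finset.univ.filter (fun r => φ r = i)).Nonempty := by
      intro i
      rw [Finset.nonempty_iff_ne_empty]
      intro hemp
      have : d i = 1 := by rw [hd]; simp [hemp]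
      have := ha i; have := hdeq i; omega
    have hcard : n' = ∑ i : Fin n, (Finset.univ.filter (fun r => φ r = i)).card := by
      have := Finset.card_eq_sum_card_fiberwise (f := φ) (s := Finset.univ)
        (t := Finset.univ) (fun x _ => Finset.mem_univ (φ x))
      simpa using this
    by_cases hone : ∀ i : Fin n, (Finset.univ.filter (fun r => φ r = i)).card = 1
    · -- all fibers singletons: multisets are equal, contradiction
      exfalso
      apply hne
      rw [multiset_ofFn_eq, multiset_ofFn_eq, map_val_eq_sum_singleton,
        map_val_eq_sum_singleton]
      rw [← Finset.sum_fiberwise_of_maps_to (fun r _ => Finset.mem_univ (φ r))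
        (fun r => ({a' r} : Multiset ℕ))]
      refine Finset.sum_congr rfl (fun i _ => ?_)
      obtain ⟨r, hr⟩ := Finset.card_eq_one.1 (hone i)
      rw [hr, Finset.sum_singleton]
      have hdr : d i = a' r := by
        rw [show d i = ∏ r ∈ Finset.filter (fun r => φ r = i) Finset.univ, a' r from rfl,
          hr, Finset.prod_singleton]
      rw [← hdeq i, hdr]
    · push_neg at hone
      obtain ⟨j, hj⟩ := hone
      have hj1 : 1 ≤ (Finset.univ.filter (fun r => φ r = j)).card :=
        Finset.card_pos.2 (hfib j)
      right
      constructor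
      · rw [hP', hEq]
      · have : ∑ i : Fin n, 1 < ∑ i : Fin n, (Finset.univ.filter (fun r => φ r = i)).card :=
          Finset.sum_lt_sum (fun i _ => Finset.card_pos.2 (hfib i))
            ⟨j, Finset.mem_univ j, by omega⟩
        simpa [hcard] using this
  · left
    rw [hP']
    exact omega_lt_of_dvd hdvd haP hEq

open ArithmeticFunction

theorem no_infinite_nontrivial_factored_subform_chain :
    ¬ ∃ (N : ℕ → ℕ) (A : ∀ k : ℕ, Fin (N k) → ℕ),
      (∀ (k : ℕ) (i : Fin (N k)), 2 ≤ A k i) ∧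
      (∀ k : ℕ, NontrivialFactoredSubform (A (k + 1)) (A k)) := by
  rintro ⟨N, A, h2, hsub⟩
  set g : ℕ → ℕ := fun k => Ω (∏ i, A k i) with hg
  have hstep : ∀ k, g (k + 1) < g k ∨ (g (k + 1) = g k ∧ N k < N (k + 1)) :=
    fun k => descent_step (h2 k) (h2 (k + 1)) (hsub k)
  have hNle : ∀ k, N k ≤ g k := fun k => card_le_omega_prod (A k) (h2 k)
  set M := g 0 with hM
  have hgle : ∀ k, g k ≤ M := by
    intro k
    induction k with
    | zero => exact le_rfl
    | succ m ih => rcases hstep m with h | ⟨h, _⟩ <;> omega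
  set f : ℕ → ℕ := fun k => g k * (M + 1) + (M - N k) with hf
  have hdec : ∀ k, f (k + 1) < f k := by
    intro k
    rcases hstep k with h | ⟨h1, h2'⟩
    · have hb : M - N (k + 1) ≤ M := Nat.sub_le _ _
      have : g (k + 1) * (M + 1) + (M + 1) ≤ g k * (M + 1) := by
        have : g (k + 1) + 1 ≤ g k := h
        calc g (k + 1) * (M + 1) + (M + 1) = (g (k + 1) + 1) * (M + 1) := by ring
          _ ≤ g k * (M + 1) := Nat.mul_le_mul_right _ this
      simp only [hf]
      omega
    · have := hNle (k + 1)
      have := hgle (k + 1)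
      simp only [hf, h1]
      omega
  have hbound : ∀ k, f k + k ≤ f 0 := by
    intro k
    induction k with
    | zero => omega
    | succ m ih => have := hdec m; omega
  have := hbound (f 0 + 1)
  omega
end

section
/- For every real ε > 0 there exist positive integers p and q such that q · Real.log 3 − p · Real.log 5 ≠ 0 and |q · Real.log 3 − p · Real.log 5| < ε. -/
theorem small_nonzero_linear_form_in_two_logs (ε : ℝ) (hε : 0 < ε) :
    ∃ p q : ℕ, 0 < p ∧ 0 < q ∧
      (q : ℝ) * Real.log 3 - (p : ℝ) * Real.log 5 ≠ 0 ∧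
      |(q : ℝ) * Real.log 3 - (p : ℝ) * Real.log 5| < ε := by
  have hlog5 : 0 < Real.log 5 := Real.log_pos (by norm_num)
  have hlog3 : 0 < Real.log 3 := Real.log_pos (by norm_num)
  set α : ℝ := Real.log 3 / Real.log 5 with hα
  have hαpos : 0 < α := div_pos hlog3 hlog5
  -- pick n large
  obtain ⟨n, hn⟩ := exists_nat_gt (max (Real.log 5 / ε) (1 / α))
  have hnpos : 0 < n + 1 := Nat.succ_pos n
  obtain ⟨j, k, hk0, hkn, habs⟩ := Real.exists_int_int_abs_mul_sub_le α hnpos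
  have hn1 : (0:ℝ) < (n:ℝ) + 1 + 1 := by positivity
  have hsmall : (1:ℝ) / (↑(n+1) + 1) < min (ε / Real.log 5) α := by
    have h1 : Real.log 5 / ε < n := lt_of_le_of_lt (le_max_left _ _) hn
    have h2 : 1 / α < n := lt_of_le_of_lt (le_max_right _ _) hn
    push_cast
    rw [lt_min_iff]
    constructor
    · rw [div_lt_div_iff₀ hn1 hlog5]
      nlinarith [(div_lt_iff₀ hε).mp h1]
    · rw [div_lt_iff₀ hn1]
      nlinarith [(div_lt_iff₀ hαpos).mp h2]
  have habs' : |(k:ℝ) * α - j| < min (ε / Real.log 5) α := by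
    exact lt_of_le_of_lt habs hsmall
  -- j must be positive
  have hj0 : 0 < j := by
    by_contra hj
    push_neg at hj
    have : α ≤ |(k:ℝ) * α - j| := by
      rw [abs_sub_comm, abs_of_nonpos]
      · have hk1 : (1:ℝ) ≤ k := by exact_mod_cast hk0
        have hjr : (j:ℝ) ≤ 0 := by exact_mod_cast hj
        nlinarith
      · have hk1 : (1:ℝ) ≤ k := by exact_mod_cast hk0
        have hjr : (j:ℝ) ≤ 0 := by exact_mod_cast hj
        nlinarith
    exact absurd (this.trans_lt (habs'.trans_le (min_le_right _ _))) (lt_irrefl _)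
  refine ⟨j.toNat, k.toNat, by omega, by omega, ?_, ?_⟩
  · -- nonzero
    intro h
    have hkk : ((k.toNat : ℝ)) = (k:ℝ) := by exact_mod_cast Int.toNat_of_nonneg hk0.le
    have hjj : ((j.toNat : ℝ)) = (j:ℝ) := by exact_mod_cast Int.toNat_of_nonneg hj0.le
    have heq : (k:ℝ) * Real.log 3 = (j:ℝ) * Real.log 5 := by
      rw [hkk, hjj] at h; linarith
    have hpow : ((3:ℝ)) ^ k.toNat = (5:ℝ) ^ j.toNat := by
      have h3 : Real.log ((3:ℝ) ^ k.toNat) = Real.log ((5:ℝ) ^ j.toNat) := by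
        rw [Real.log_pow, Real.log_pow, ← hkk, ← hjj] at *
        rw [hkk, hjj]; exact heq
      have e1 := Real.exp_log (x := (3:ℝ) ^ k.toNat) (by positivity)
      have e2 := Real.exp_log (x := (5:ℝ) ^ j.toNat) (by positivity)
      rw [← e1, ← e2, h3]
    have hnat : (3:ℕ) ^ k.toNat = 5 ^ j.toNat := by exact_mod_cast hpow
    have h3dvd : (3:ℕ) ∣ 5 ^ j.toNat := by
      rw [← hnat]
      exact dvd_pow_self 3 (by omega)
    have := (Nat.Prime.dvd_of_dvd_pow (by norm_num) h3dvd)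
    omega
  · -- smallness
    have hkk : ((k.toNat : ℝ)) = (k:ℝ) := by exact_mod_cast Int.toNat_of_nonneg hk0.le
    have hjj : ((j.toNat : ℝ)) = (j:ℝ) := by exact_mod_cast Int.toNat_of_nonneg hj0.le
    rw [hkk, hjj]
    have key : (k:ℝ) * Real.log 3 - (j:ℝ) * Real.log 5 = ((k:ℝ) * α - j) * Real.log 5 := by
      rw [hα]; field_simp
    rw [key, abs_mul, abs_of_pos hlog5]
    calc |(k:ℝ) * α - j| * Real.log 5 < (ε / Real.log 5) * Real.log 5 := by
          apply mul_lt_mul_of_pos_right _ hlog5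
          exact habs'.trans_le (min_le_left _ _)
      _ = ε := by field_simp
end

section
/- Let n ≤ N be natural numbers, let a : Fin n → ℕ with a i ≥ 1 for all i, and let g : Fin N → ℚ be a straight-line program over {*, /} with inputs a, i.e.: g i = (a i : ℚ) for every i < n, and for every m with n ≤ m < N there exist indices i, j < m such that g m = g i * g j or g m = g i / g j. Then for every m < N there exists b : Fin n → ℤ with |b i| ≤ 2^m for all i, such that g m = ∏ i, ((a i : ℚ)) ^ (b i), where the exponentiation is integer power (zpow) in ℚ. -/
theorem slp_to_poe (n N : ℕ) (hnN : n ≤ N)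
    (a : Fin n → ℕ) (ha : ∀ i, 1 ≤ a i) (g : Fin N → ℚ)
    (hinput : ∀ i : Fin n, g (Fin.castLE hnN i) = (a i : ℚ))
    (hgate : ∀ m : Fin N, n ≤ (m : ℕ) →
      ∃ i j : Fin N, (i : ℕ) < (m : ℕ) ∧ (j : ℕ) < (m : ℕ) ∧
        (g m = g i * g j ∨ g m = g i / g j)) :
    ∀ m : Fin N, ∃ b : Fin n → ℤ, (∀ i, |b i| ≤ 2 ^ (m : ℕ)) ∧
      g m = ∏ i, ((a i : ℚ)) ^ (b i) := by
  have ha' : ∀ i, (a i : ℚ) ≠ 0 := by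
    intro i
    have := ha i; exact Nat.cast_ne_zero.mpr (by omega)
  have key : ∀ k : ℕ, ∀ m : Fin N, (m : ℕ) = k →
      ∃ b : Fin n → ℤ, (∀ i, |b i| ≤ 2 ^ (m : ℕ)) ∧
        g m = ∏ i, ((a i : ℚ)) ^ (b i) := by
    intro k
    induction k using Nat.strong_induction_on with
    | _ k ih =>
      intro m hm
      by_cases h : (m : ℕ) < n
      · -- input gate
        refine ⟨fun i => if i = ⟨(m : ℕ), h⟩ then 1 else 0, ?_, ?_⟩
        · intro i
          dsimp only
          split <;> simp only [abs_one, abs_zero]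
          · exact one_le_pow₀ one_le_two
          · positivity
        · have : m = Fin.castLE hnN ⟨(m : ℕ), h⟩ := by
            ext; rfl
          have hg := hinput ⟨(m : ℕ), h⟩
          rw [← this] at hg
          rw [hg, Finset.prod_eq_single ⟨(m : ℕ), h⟩]
          · simp
          · intro c _ hc; simp [hc]
          · simp
      · obtain ⟨i, j, hi, hj, hc⟩ := hgate m (le_of_not_gt h)
        obtain ⟨bi, hbi, hgi⟩ := ih (i : ℕ) (hm ▸ hi) i rfl
        obtain ⟨bj, hbj, hgj⟩ := ih (j : ℕ) (hm ▸ hj) j rfl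
        have hm1 : 1 ≤ (m : ℕ) := Nat.one_le_iff_ne_zero.mpr (by omega)
        have hbound : ∀ c : Fin n, |bi c| + |bj c| ≤ 2 ^ (m : ℕ) := by
          intro c
          have h1 : |bi c| ≤ 2 ^ ((m : ℕ) - 1) :=
            le_trans (hbi c) (pow_le_pow_right₀ (by norm_num) (by omega))
          have h2 : |bj c| ≤ 2 ^ ((m : ℕ) - 1) :=
            le_trans (hbj c) (pow_le_pow_right₀ (by norm_num) (by omega))
          have h3 : (2 : ℤ) ^ ((m : ℕ) - 1) + 2 ^ ((m : ℕ) - 1) = 2 ^ (m : ℕ) := by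
            rw [← two_mul, ← pow_succ']
            congr 1
            omega
          linarith
        rcases hc with hc | hc
        · refine ⟨fun c => bi c + bj c, ?_, ?_⟩
          · intro c
            exact le_trans (abs_add_le _ _) (hbound c)
          · rw [hc, hgi, hgj, ← Finset.prod_mul_distrib]
            exact Finset.prod_congr rfl fun c _ => (zpow_add₀ (ha' c) _ _).symm
        · refine ⟨fun c => bi c - bj c, ?_, ?_⟩
          · intro c
            exact le_trans (abs_sub _ _) (hbound c)
          · rw [hc, hgi, hgj, ← Finset.prod_div_distrib]
            exact Finset.prod_congr rfl fun c _ => (zpow_sub₀ (ha' c) _ _).symm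
  intro m
  exact key (m : ℕ) m rfl
end

section
/- Let n be a natural number, and let a : Fin n → ℕ and b : Fin n → ℕ with a i ≥ 1 and b i ≥ 1 for all i. Then there exist a natural number N with n ≤ N ≤ n + n + 2 · ∑ i, (Nat.log2 (b i) + 1), and a straight-line program over {*, /} with inputs a, i.e. a sequence g : Fin N → ℚ with g i = (a i : ℚ) for every i < n and such that for every m with n ≤ m < N there exist indices i, j < m with g m = g i * g j or g m = g i / g j, whose last entry satisfies g (N − 1) = ∏ i, ((a i : ℚ)) ^ (b i). -/
/-- A list `L` is a valid straight-line program over `{*, /}` with inputs `a`. -/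
def SLPValid (n : ℕ) (a : Fin n → ℕ) (L : List ℚ) : Prop :=
  n ≤ L.length ∧
  (∀ i : Fin n, L.getD i 0 = (a i : ℚ)) ∧
  (∀ m, n ≤ m → m < L.length → ∃ i j, i < m ∧ j < m ∧
    (L.getD m 0 = L.getD i 0 * L.getD j 0 ∨ L.getD m 0 = L.getD i 0 / L.getD j 0))

lemma slp_getD_prefix (L M : List ℚ) (p : ℕ) (h : p < L.length) :
    (L ++ M).getD p 0 = L.getD p 0 := List.getD_append _ _ _ _ h

lemma slp_getD_last (L : List ℚ) (x : ℚ) : (L ++ [x]).getD L.length 0 = x := by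
  simp [List.getD]

lemma slp_valid_append {n : ℕ} {a : Fin n → ℕ} {L : List ℚ} (hL : SLPValid n a L)
    {i j : ℕ} (hi : i < L.length) (hj : j < L.length) {x : ℚ}
    (hx : x = L.getD i 0 * L.getD j 0 ∨ x = L.getD i 0 / L.getD j 0) :
    SLPValid n a (L ++ [x]) := by
  obtain ⟨hn, hin, hg⟩ := hL
  refine ⟨le_trans hn (by simp), ?_, ?_⟩
  · intro k
    rw [slp_getD_prefix _ _ _ (lt_of_lt_of_le k.2 hn)]
    exact hin k
  · intro m hm hmlen
    simp only [List.length_append, List.length_singleton] at hmlen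
    rcases lt_or_eq_of_le (Nat.lt_succ_iff.mp hmlen) with hlt | heq
    · obtain ⟨i', j', hi', hj', hor⟩ := hg m hm hlt
      refine ⟨i', j', hi', hj', ?_⟩
      rw [slp_getD_prefix _ _ _ hlt, slp_getD_prefix _ _ _ (lt_trans hi' hlt),
        slp_getD_prefix _ _ _ (lt_trans hj' hlt)]
      exact hor
    · subst heq
      refine ⟨i, j, hi, hj, ?_⟩
      rw [slp_getD_last, slp_getD_prefix _ _ _ hi, slp_getD_prefix _ _ _ hj]
      exact hx

/-- Square-and-multiply: extend a valid program to compute `x ^ e`. -/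
lemma slp_pow (n : ℕ) (a : Fin n → ℕ) :
    ∀ e, 1 ≤ e → ∀ L : List ℚ, SLPValid n a L → ∀ p, p < L.length →
      ∃ M q, SLPValid n a (L ++ M) ∧ q < (L ++ M).length ∧
        (L ++ M).getD q 0 = (L.getD p 0) ^ e ∧
        (L ++ M).length ≤ L.length + 2 * Nat.log2 e := by
  intro e
  induction e using Nat.strong_induction_on with
  | _ e IH =>
    intro he L hL p hp
    rcases lt_or_ge e 2 with h2 | h2
    · -- e = 1
      interval_cases e
      refine ⟨[], p, by simpa using hL, by simpa using hp, by simp, by simp⟩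
    · -- e ≥ 2
      have hf1 : 1 ≤ e / 2 := Nat.one_le_div_iff (by norm_num) |>.mpr h2
      have hfe : e / 2 < e := Nat.div_lt_self (by omega) (by norm_num)
      obtain ⟨M, q, hLM, hq, hval, hlen⟩ := IH (e / 2) hfe hf1 L hL p hp
      have hlog : Nat.log2 e = Nat.log2 (e / 2) + 1 := by
        rw [Nat.log2_def]; simp [h2]
      set L' := L ++ M with hL'
      have hL'len : L'.length = L.length + M.length := by simp [hL']
      have hx : (L ++ M).getD p 0 = L.getD p 0 := slp_getD_prefix _ _ _ hp
      set y := L'.getD q 0 with hy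
      rcases Nat.even_or_odd e with hev | hodd
      · -- even: append y * y
        refine ⟨M ++ [y * y], L'.length, ?_, ?_, ?_, ?_⟩
        · rw [← List.append_assoc]
          exact slp_valid_append hLM hq hq (Or.inl rfl)
        · simp [hL']
        · rw [← List.append_assoc, slp_getD_last, hval, ← pow_add]
          obtain ⟨c, hc⟩ := hev
          congr 1
          omega
        · simp only [← List.append_assoc, List.length_append, List.length_singleton]
          omega
      · -- odd: append y * y then (y*y) * x
        set z := y * y with hz
        have hv1 : SLPValid n a (L' ++ [z]) := slp_valid_append hLM hq hq (Or.inl rfl)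
        have hplen : p < (L' ++ [z]).length := by
          simp only [List.length_append, List.length_singleton]
          omega
        have hzpos : L'.length < (L' ++ [z]).length := by simp
        have hv2 : SLPValid n a ((L' ++ [z]) ++ [(L' ++ [z]).getD L'.length 0 *
            (L' ++ [z]).getD p 0]) := slp_valid_append hv1 hzpos hplen (Or.inl rfl)
        have hgz : (L' ++ [z]).getD L'.length 0 = z := slp_getD_last _ _
        have hgp : (L' ++ [z]).getD p 0 = L.getD p 0 := by
          rw [slp_getD_prefix _ _ _ (lt_of_lt_of_le hp (by simp [hL'] : L.length ≤ L'.length)), hx]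
        refine ⟨M ++ [z] ++ [(L' ++ [z]).getD L'.length 0 * (L' ++ [z]).getD p 0],
          (L' ++ [z]).length, ?_, ?_, ?_, ?_⟩
        · rw [← List.append_assoc, ← List.append_assoc]
          exact hv2
        · simp [hL']
        · rw [← List.append_assoc, ← List.append_assoc, slp_getD_last, hgz, hgp, hz, hval,
            ← pow_add, ← pow_succ]
          obtain ⟨c, hc⟩ := hodd
          congr 1
          omega
        · simp only [← List.append_assoc, List.length_append, List.length_singleton]
          omega

/-- Accumulation: compute the partial products. -/
lemma slp_accum (n : ℕ) (a b : Fin n → ℕ) (hb : ∀ i, 1 ≤ b i) :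
    ∀ k, 1 ≤ k → ∀ hk : k ≤ n,
      ∃ L q, SLPValid n a L ∧ q < L.length ∧
        L.getD q 0 = ∏ i : Fin k, ((a (Fin.castLE hk i) : ℚ)) ^ (b (Fin.castLE hk i)) ∧
        L.length ≤ n + 2 * (∑ i : Fin k, Nat.log2 (b (Fin.castLE hk i))) + (k - 1) := by
  intro k hk1
  induction k, hk1 using Nat.le_induction with
  | base =>
    intro hk
    set L0 : List ℚ := List.ofFn (fun i : Fin n => (a i : ℚ)) with hL0
    have hlen0 : L0.length = n := by simp [hL0]
    have hval0 : SLPValid n a L0 := by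
      refine ⟨le_of_eq hlen0.symm, ?_, ?_⟩
      · intro i; simp [hL0, List.getD]
      · intro m hm hmlen; omega
    have h0 : (0 : ℕ) < L0.length := by omega
    obtain ⟨M, q, hLM, hq, hval, hlen⟩ :=
      slp_pow n a (b ⟨0, hk⟩) (hb _) L0 hval0 0 h0
    refine ⟨L0 ++ M, q, hLM, hq, ?_, ?_⟩
    · rw [hval]
      have : L0.getD 0 0 = ((a ⟨0, hk⟩ : ℕ) : ℚ) := hval0.2.1 ⟨0, hk⟩
      rw [this, Fin.prod_univ_one]
      rfl
    · rw [Fin.sum_univ_one]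
      have hc : Fin.castLE hk (0 : Fin 1) = ⟨0, hk⟩ := rfl
      rw [hc]
      have hMlen : (L0 ++ M).length = L0.length + M.length := by simp
      omega
  | succ k hk1 IH =>
    intro hk
    have hk' : k ≤ n := le_trans (Nat.le_succ k) hk
    obtain ⟨L, q, hL, hq, hval, hlen⟩ := IH hk'
    have hkpos : (k : ℕ) < L.length := lt_of_lt_of_le hk hL.1
    obtain ⟨M, q', hLM, hq', hval', hlen'⟩ :=
      slp_pow n a (b ⟨k, hk⟩) (hb _) L hL k hkpos
    have hqpre : q < (L ++ M).length := lt_of_lt_of_le hq (by simp)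
    set x := (L ++ M).getD q 0 * (L ++ M).getD q' 0 with hx
    refine ⟨(L ++ M) ++ [x], (L ++ M).length,
      slp_valid_append hLM hqpre hq' (Or.inl rfl), by simp, ?_, ?_⟩
    · rw [slp_getD_last, hx, slp_getD_prefix _ _ _ hq, hval, hval',
        Fin.prod_univ_castSucc]
      have hgk : L.getD k 0 = ((a ⟨k, hk⟩ : ℕ) : ℚ) := hL.2.1 ⟨k, hk⟩
      rw [hgk]
      congr 1
    · simp only [List.length_append, List.length_singleton]
      have hMlen : (L ++ M).length = L.length + M.length := by simp
      rw [Fin.sum_univ_castSucc]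
      have : ∑ i : Fin k, Nat.log2 (b (Fin.castLE hk i.castSucc)) =
          ∑ i : Fin k, Nat.log2 (b (Fin.castLE hk' i)) :=
        Finset.sum_congr rfl (fun i _ => rfl)
      rw [this]
      have hlast : Fin.castLE hk (Fin.last k) = ⟨k, hk⟩ := rfl
      rw [hlast]
      omega

theorem poe_to_slp (n : ℕ) (a b : Fin n → ℕ)
    (ha : ∀ i, 1 ≤ a i) (hb : ∀ i, 1 ≤ b i) :
    ∃ (N : ℕ) (hnN : n ≤ N),
      N ≤ n + n + 2 * ∑ i, (Nat.log2 (b i) + 1) ∧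
      ∃ g : Fin N → ℚ,
        (∀ i : Fin n, g (Fin.castLE hnN i) = (a i : ℚ)) ∧
        (∀ m : Fin N, n ≤ (m : ℕ) →
          ∃ i j : Fin N, (i : ℕ) < (m : ℕ) ∧ (j : ℕ) < (m : ℕ) ∧
            (g m = g i * g j ∨ g m = g i / g j)) ∧
        (∀ m : Fin N, (m : ℕ) + 1 = N → g m = ∏ i, ((a i : ℚ)) ^ (b i)) := by
  rcases Nat.eq_zero_or_pos n with hn0 | hn1
  · subst hn0
    exact ⟨0, le_refl 0, by simp, Fin.elim0, fun i => i.elim0, fun m => m.elim0,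
      fun m => m.elim0⟩
  · obtain ⟨L, q, hL, hq, hval, hlen⟩ := slp_accum n a b hb n hn1 (le_refl n)
    have hcast : ∀ i : Fin n, Fin.castLE (le_refl n) i = i := fun i => rfl
    have hprod : L.getD q 0 = ∏ i, ((a i : ℚ)) ^ (b i) := by
      rw [hval]; exact Finset.prod_congr rfl (fun i _ => by rw [hcast])
    have hvpos : (0 : ℚ) < L.getD q 0 := by
      rw [hprod]
      exact Finset.prod_pos (fun i _ => pow_pos (by exact_mod_cast ha i) _)
    set v := L.getD q 0 with hv
    -- append 1 = v / v and then v * 1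
    set L1 := L ++ [v / v] with hL1
    have hvalid1 : SLPValid n a L1 := slp_valid_append hL hq hq (Or.inr rfl)
    have hq1 : q < L1.length := lt_of_lt_of_le hq (by simp [hL1])
    have hL1len : L.length < L1.length := by simp [hL1]
    set x := L1.getD q 0 * L1.getD L.length 0 with hx
    set L2 := L1 ++ [x] with hL2
    have hvalid2 : SLPValid n a L2 := slp_valid_append hvalid1 hq1 hL1len (Or.inl rfl)
    have hg1 : L1.getD q 0 = v := slp_getD_prefix _ _ _ hq
    have hg2 : L1.getD L.length 0 = v / v := slp_getD_last _ _
    have hxval : x = v := by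
      rw [hx, hg1, hg2, div_self (ne_of_gt hvpos), mul_one]
    refine ⟨L2.length, hvalid2.1, ?_, fun m => L2.getD m 0, ?_, ?_, ?_⟩
    · have hsum : ∑ i, (Nat.log2 (b i) + 1) = (∑ i, Nat.log2 (b i)) + n := by
        rw [Finset.sum_add_distrib]; simp
      have hsum2 : ∑ i : Fin n, Nat.log2 (b (Fin.castLE (le_refl n) i)) =
          ∑ i, Nat.log2 (b i) := Finset.sum_congr rfl (fun i _ => rfl)
      have hlen2 : L2.length = L.length + 2 := by simp [hL2, hL1]
      rw [hsum2] at hlen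
      omega
    · intro i
      exact hvalid2.2.1 i
    · intro m hm
      obtain ⟨i, j, hi, hj, hor⟩ := hvalid2.2.2 m hm m.2
      exact ⟨⟨i, lt_trans hi m.2⟩, ⟨j, lt_trans hj m.2⟩, hi, hj, hor⟩
    · intro m hm
      have hmL1 : (m : ℕ) = L1.length := by
        have : L2.length = L1.length + 1 := by simp [hL2]
        omega
      show L2.getD (m : ℕ) 0 = _
      rw [hmL1, hL2, slp_getD_last, hxval]
      exact hprod
end
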